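/- Let h, g : ℤ → ℝ be finitely supported filters satisfying ∑_{l∈ℤ} h_l h_{l+2k} = (1/2)·δ_{k,0} and ∑_{l∈ℤ} g_l g_{l+2k} = (1/2)·δ_{k,0} for every integer k. Let (y_t)_{t≥0} be i.i.d. real random variables with E y_0 = 0, E y_0² = σ² > 0 and E y_0⁴ < ∞. For each positive integer T regard (y_0, …, y_{T−1}) as a function on ℤ/Tℤ, define W_{m,n,t} = ∑_{l∈ℤ} v_{m,n,l} y_{t−(l mod T)} for t ∈ ℤ/Tℤ, and set ξ̂_{m,n,T} = (∑_{t∈ℤ/Tℤ} W_{m,n,t}²)/(∑_{t∈ℤ/Tℤ} y_t²). Then for every m ≥ 1 and every 0 ≤ n ≤ 2^m − 1, ξ̂_{m,n,T} converges in probability to 1/2^m as T → ∞. -/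

import Mathlib

open MeasureTheory ProbabilityTheory Filter Finset Topology

noncomputable def uF (g h : ℤ → ℝ) (n : ℕ) : ℤ → ℝ :=
  fun l => if n % 4 = 0 ∨ n % 4 = 3 then g l else h l

noncomputable def wp (g h : ℤ → ℝ) : ℕ → ℕ → ℤ → ℝ
  | 0, _, _ => 0
  | 1, n, l => if n = 0 then g l else h l
  | (m + 2), n, l => ∑ᶠ k : ℤ, uF g h n k * wp g h (m + 1) (n / 2) (l - 2 ^ (m + 1) * k)

lemma uF_eq (g h : ℤ → ℝ) (n : ℕ) : uF g h n = g ∨ uF g h n = h := by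
  by_cases hc : n % 4 = 0 ∨ n % 4 = 3
  · left; funext l; simp [uF, hc]
  · right; funext l; simp [uF, hc]

lemma uF_fin (g h : ℤ → ℝ) (hg : (Function.support g).Finite)
    (hh : (Function.support h).Finite) (n : ℕ) : (Function.support (uF g h n)).Finite := by
  rcases uF_eq g h n with h' | h' <;> rw [h'] <;> assumption

lemma wp_fin (g h : ℤ → ℝ) (hg : (Function.support g).Finite)
    (hh : (Function.support h).Finite) :
    ∀ m n : ℕ, (Function.support (wp g h m n)).Finite := by
  intro m
  induction m using Nat.strong_induction_on with
  | _ m ih =>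
    match m with
    | 0 => intro n; simp only [wp]; simpa using Set.finite_empty
    | 1 =>
      intro n
      by_cases hn : n = 0 <;> simp only [wp, hn, if_true, if_false] <;>
        [exact hg; simpa [hn] using hh]
    | (m + 2) =>
      intro n
      have hu := uF_fin g h hg hh n
      have hv := ih (m + 1) (by omega) (n / 2)
      have key : Function.support (wp g h (m + 2) n) ⊆
          ⋃ k ∈ Function.support (uF g h n),
            (fun l => l + 2 ^ (m + 1) * k) '' Function.support (wp g h (m + 1) (n / 2)) := by
        intro l hl
        rw [Function.mem_support] at hl
        have : ∃ k : ℤ, uF g h n k * wp g h (m + 1) (n / 2) (l - 2 ^ (m + 1) * k) ≠ 0 := by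
          by_contra hcon
          push_neg at hcon
          exact hl (by simp only [wp]; exact finsum_eq_zero_of_forall_eq_zero hcon)
        obtain ⟨k, hk⟩ := this
        have h1 : uF g h n k ≠ 0 := fun h0 => hk (by simp [h0])
        have h2 : wp g h (m + 1) (n / 2) (l - 2 ^ (m + 1) * k) ≠ 0 := fun h0 => hk (by simp [h0])
        refine Set.mem_biUnion h1 ⟨l - 2 ^ (m + 1) * k, h2, by ring⟩
      exact ((hu.biUnion fun k _ => hv.image _).subset key)

lemma wp_orth (g h : ℤ → ℝ) (hg : (Function.support g).Finite)
    (hh : (Function.support h).Finite)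
    (horth_h : ∀ k : ℤ,
      ∑ᶠ l : ℤ, h l * h (l + 2 * k) = (1 / 2) * (if k = 0 then 1 else 0))
    (horth_g : ∀ k : ℤ,
      ∑ᶠ l : ℤ, g l * g (l + 2 * k) = (1 / 2) * (if k = 0 then 1 else 0)) :
    ∀ m : ℕ, 1 ≤ m → ∀ n : ℕ, ∀ j : ℤ,
      ∑ᶠ l : ℤ, wp g h m n l * wp g h m n (l + 2 ^ m * j)
        = (1 / 2 : ℝ) ^ m * (if j = 0 then 1 else 0) := by
  intro m
  induction m using Nat.strong_induction_on with
  | _ m ih =>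
    match m with
    | 0 => intro hm; omega
    | 1 =>
      intro _ n j
      by_cases hn : n = 0 <;>
        simp only [wp, hn, if_true, if_false, pow_one] <;>
        [simpa using horth_g j; simpa [hn] using horth_h j]
    | (m + 2) =>
      intro _ n j
      set u : ℤ → ℝ := uF g h n with hu_def
      set v : ℤ → ℝ := wp g h (m + 1) (n / 2) with hv_def
      set p : ℤ := 2 ^ (m + 1) with hp_def
      have hu := uF_fin g h hg hh n
      have hvfin := wp_fin g h hg hh (m + 1) (n / 2)
      set Su : Finset ℤ := hu.toFinset with hSu
      set Sv : Finset ℤ := hvfin.toFinset with hSv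
      set E : Finset ℤ := (Su ×ˢ Sv).image (fun q => q.2 + p * q.1) with hE
      have hvmem : ∀ l : ℤ, l ∉ Sv → v l = 0 := by
        intro l hl
        by_contra h0
        exact hl (hvfin.mem_toFinset.2 h0)
      have humem : ∀ k : ℤ, k ∉ Su → u k = 0 := by
        intro k hk
        by_contra h0
        exact hk (hu.mem_toFinset.2 h0)
      -- step 1
      have step1 : ∀ l : ℤ, wp g h (m + 2) n l = ∑ k ∈ Su, u k * v (l - p * k) := by
        intro l
        simp only [wp]
        refine finsum_eq_sum_of_support_subset _ ?_
        intro k hk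
        simp only [Function.mem_support] at hk
        have : u k ≠ 0 := fun h0 => hk (by simp [hu_def ▸ h0, h0])
        exact hu.mem_toFinset.2 this
      -- support of wp (m+2) inside E
      have hsupp : ∀ l : ℤ, wp g h (m + 2) n l ≠ 0 → l ∈ E := by
        intro l hl
        rw [step1 l] at hl
        obtain ⟨k, hkSu, hk⟩ := Finset.exists_ne_zero_of_sum_ne_zero hl
        have h2 : v (l - p * k) ≠ 0 := fun h0 => hk (by simp [h0])
        refine Finset.mem_image.2 ⟨(k, l - p * k), Finset.mem_product.2 ⟨hkSu, hvfin.mem_toFinset.2 h2⟩, by ring⟩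
      have hIH : ∀ r : ℤ, ∑ᶠ l : ℤ, v l * v (l + p * r)
          = (1 / 2 : ℝ) ^ (m + 1) * (if r = 0 then 1 else 0) :=
        fun r => ih (m + 1) (by omega) (by omega) (n / 2) r
      -- u orthogonality
      have huorth : ∀ r : ℤ, ∑ᶠ k : ℤ, u k * u (k + 2 * r) = (1 / 2) * (if r = 0 then 1 else 0) := by
        intro r
        rcases uF_eq g h n with h' | h' <;> rw [hu_def, h'] <;> [exact horth_g r; exact horth_h r]
      calc ∑ᶠ l : ℤ, wp g h (m + 2) n l * wp g h (m + 2) n (l + 2 ^ (m + 2) * j)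
          = ∑ l ∈ E, wp g h (m + 2) n l * wp g h (m + 2) n (l + 2 ^ (m + 2) * j) := by
            refine finsum_eq_sum_of_support_subset _ ?_
            intro l hl
            rw [Function.mem_support] at hl
            have : wp g h (m + 2) n l ≠ 0 := fun h0 => hl (by simp [h0])
            exact hsupp l this
        _ = ∑ l ∈ E, ∑ k ∈ Su, ∑ k' ∈ Su,
              (u k * u k') * (v (l - p * k) * v (l + 2 ^ (m + 2) * j - p * k')) := by
            refine Finset.sum_congr rfl fun l _ => ?_
            rw [step1 l, step1 (l + 2 ^ (m + 2) * j), Finset.sum_mul_sum]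
            exact Finset.sum_congr rfl fun k _ => Finset.sum_congr rfl fun k' _ => by ring
        _ = ∑ k ∈ Su, ∑ k' ∈ Su, (u k * u k') *
              ∑ l ∈ E, v (l - p * k) * v (l + 2 ^ (m + 2) * j - p * k') := by
            rw [Finset.sum_comm]
            refine Finset.sum_congr rfl fun k _ => ?_
            rw [Finset.sum_comm]
            refine Finset.sum_congr rfl fun k' _ => ?_
            rw [Finset.mul_sum]
        _ = ∑ k ∈ Su, ∑ k' ∈ Su, (u k * u k') *
              ((1 / 2 : ℝ) ^ (m + 1) * (if 2 * j + k - k' = 0 then 1 else 0)) := by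
            refine Finset.sum_congr rfl fun k hk => Finset.sum_congr rfl fun k' _ => ?_
            congr 1
            have hsub : ∑ l ∈ E, v (l - p * k) * v (l + 2 ^ (m + 2) * j - p * k')
                = ∑ᶠ l : ℤ, v (l - p * k) * v (l + 2 ^ (m + 2) * j - p * k') := by
              refine (finsum_eq_sum_of_support_subset _ ?_).symm
              intro l hl
              rw [Function.mem_support] at hl
              have h2 : v (l - p * k) ≠ 0 := fun h0 => hl (by simp [h0])
              exact Finset.mem_image.2 ⟨(k, l - p * k),
                Finset.mem_product.2 ⟨hk, hvfin.mem_toFinset.2 h2⟩, by ring⟩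
            rw [hsub]
            have hre : ∑ᶠ l : ℤ, v (l - p * k) * v (l + 2 ^ (m + 2) * j - p * k')
                = ∑ᶠ l : ℤ, v l * v (l + p * (2 * j + k - k')) := by
              rw [← finsum_comp_equiv (Equiv.addRight (p * k))
                (f := fun l => v (l - p * k) * v (l + 2 ^ (m + 2) * j - p * k'))]
              refine finsum_congr fun l => ?_
              simp only [Equiv.coe_addRight]
              congr 2
              · ring
              · rw [hp_def]; ring
            rw [hre, hIH]
        _ = ∑ k ∈ Su, (1 / 2 : ℝ) ^ (m + 1) * (u k * u (k + 2 * j)) := by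
            refine Finset.sum_congr rfl fun k _ => ?_
            have : ∀ k' : ℤ, (u k * u k') *
                ((1 / 2 : ℝ) ^ (m + 1) * (if 2 * j + k - k' = 0 then 1 else 0))
                = if k' = 2 * j + k then (1 / 2 : ℝ) ^ (m + 1) * (u k * u k') else 0 := by
              intro k'
              by_cases hc : k' = 2 * j + k
              · simp [hc]; ring
              · have : ¬ (2 * j + k - k' = 0) := fun h0 => hc (by omega)
                simp [hc, this]
            rw [Finset.sum_congr rfl fun k' _ => this k']
            rw [Finset.sum_ite_eq' Su (2 * j + k) (fun k' => (1 / 2 : ℝ) ^ (m + 1) * (u k * u k'))]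
            by_cases hmem : 2 * j + k ∈ Su
            · simp only [hmem, if_true]
              congr 2
              ring_nf
            · simp only [hmem, if_false]
              rw [show k + 2 * j = 2 * j + k by ring, humem _ hmem]
              ring
        _ = (1 / 2 : ℝ) ^ (m + 1) * ∑ᶠ k : ℤ, u k * u (k + 2 * j) := by
            rw [← Finset.mul_sum]
            congr 1
            refine (finsum_eq_sum_of_support_subset _ ?_).symm
            intro k hk
            rw [Function.mem_support] at hk
            have : u k ≠ 0 := fun h0 => hk (by simp [h0])
            exact hu.mem_toFinset.2 this
        _ = (1 / 2 : ℝ) ^ (m + 2) * (if j = 0 then 1 else 0) := by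
            rw [huorth j]; ring



lemma st14_identity (v : ℤ → ℝ) (S : Finset ℤ) (hS : Function.support v ⊆ ↑S)
    (N : ℕ) (Y : ZMod (N + 1) → ℝ) :
    ∑ t : ZMod (N + 1), (∑ᶠ l : ℤ, v l * Y (t - (l : ZMod (N + 1)))) ^ 2
      = (∑ l ∈ S, (v l) ^ 2) * (∑ t : ZMod (N + 1), (Y t) ^ 2)
        + ∑ p ∈ (S ×ˢ S).filter (fun p => p.1 ≠ p.2), v p.1 * v p.2 *
            (∑ s : ZMod (N + 1), Y s * Y (s + ((p.1 - p.2 : ℤ) : ZMod (N + 1)))) := by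
  have step1 : ∀ t : ZMod (N + 1), (∑ᶠ l : ℤ, v l * Y (t - (l : ZMod (N + 1))))
      = ∑ l ∈ S, v l * Y (t - (l : ZMod (N + 1))) := by
    intro t
    refine finsum_eq_sum_of_support_subset _ ?_
    intro l hl
    rw [Function.mem_support] at hl
    have : v l ≠ 0 := fun h0 => hl (by simp [h0])
    exact hS this
  have main : ∑ t : ZMod (N + 1), (∑ᶠ l : ℤ, v l * Y (t - (l : ZMod (N + 1)))) ^ 2
      = ∑ p ∈ S ×ˢ S, v p.1 * v p.2 *
          (∑ s : ZMod (N + 1), Y s * Y (s + ((p.1 - p.2 : ℤ) : ZMod (N + 1)))) := by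
    have expand : ∀ t : ZMod (N + 1), (∑ᶠ l : ℤ, v l * Y (t - (l : ZMod (N + 1)))) ^ 2
        = ∑ p ∈ S ×ˢ S, (v p.1 * v p.2) * (Y (t - (p.1 : ZMod (N + 1))) *
            Y (t - (p.2 : ZMod (N + 1)))) := by
      intro t
      rw [step1 t, sq, Finset.sum_mul_sum, Finset.sum_product]
      exact Finset.sum_congr rfl fun l _ => Finset.sum_congr rfl fun l' _ => by ring
    rw [Finset.sum_congr rfl fun t _ => expand t, Finset.sum_comm]
    refine Finset.sum_congr rfl fun p _ => ?_
    rw [← Finset.mul_sum]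
    congr 1
    refine Fintype.sum_equiv (Equiv.subRight ((p.1 : ZMod (N + 1)))) _ _ fun s => ?_
    simp only [Equiv.subRight_apply]
    have h2 : s - (p.2 : ZMod (N + 1))
        = s - (p.1 : ZMod (N + 1)) + ((p.1 - p.2 : ℤ) : ZMod (N + 1)) := by push_cast; ring
    rw [h2]
  rw [main, ← Finset.sum_filter_add_sum_filter_not (S ×ˢ S) (fun p => p.1 = p.2)]
  congr 1
  · -- diagonal part
    have hdiag : ∑ p ∈ (S ×ˢ S).filter (fun p => p.1 = p.2), v p.1 * v p.2 *
          (∑ s : ZMod (N + 1), Y s * Y (s + ((p.1 - p.2 : ℤ) : ZMod (N + 1))))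
        = ∑ l ∈ S, (v l) ^ 2 * (∑ s : ZMod (N + 1), Y s * Y s) := by
      have himg : (S ×ˢ S).filter (fun p => p.1 = p.2) = S.image (fun l => (l, l)) := by
        ext p
        simp only [Finset.mem_filter, Finset.mem_product, Finset.mem_image, Prod.ext_iff]
        constructor
        · rintro ⟨⟨h1, _⟩, h3⟩; exact ⟨p.1, h1, rfl, h3⟩
        · rintro ⟨l, hl, h1, h2⟩
          subst h1
          exact ⟨⟨hl, h2 ▸ hl⟩, h2⟩
      rw [himg, Finset.sum_image (by intro a _ b _ hab; simpa [Prod.ext_iff] using hab)]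
      refine Finset.sum_congr rfl fun l _ => ?_
      simp only [sub_self, Int.cast_zero, add_zero, sq]
    rw [hdiag, ← Finset.sum_mul]
    congr 1
    exact Finset.sum_congr rfl fun s _ => (sq (Y s)).symm



lemma quart_bound (a b c d : ℝ) : |a * b * c * d| ≤ (a ^ 4 + b ^ 4 + c ^ 4 + d ^ 4) / 4 := by
  rw [abs_le]
  constructor <;>
    nlinarith [sq_nonneg (a * b - c * d), sq_nonneg (a * b + c * d), sq_nonneg (a ^ 2 - b ^ 2),
      sq_nonneg (c ^ 2 - d ^ 2), sq_nonneg (a * b), sq_nonneg (c * d)]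

lemma quart_bound' (a b c d : ℝ) : |a| * |b| * |c| * |d| ≤ (a ^ 4 + b ^ 4 + c ^ 4 + d ^ 4) / 4 := by
  rw [← abs_mul, ← abs_mul, ← abs_mul]
  exact quart_bound a b c d


section Prob


variable {Ω : Type} [MeasureSpace Ω] [IsProbabilityMeasure (ℙ : Measure Ω)]

lemma mem4_integrable_pow4 {f : Ω → ℝ} (hf : MemLp f 4) :
    Integrable (fun ω => (f ω) ^ 4) := by
  have h := hf.integrable_norm_rpow (by norm_num) (by norm_num)
  have h4 : (4 : ENNReal).toReal = ((4 : ℕ) : ℝ) := by norm_num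
  have key : ∀ ω, ‖f ω‖ ^ ((4 : ENNReal).toReal) = f ω ^ 4 := by
    intro ω
    rw [h4, Real.rpow_natCast, Real.norm_eq_abs, ← abs_pow, abs_of_nonneg (by positivity)]
  refine h.congr (Filter.Eventually.of_forall fun ω => key ω)

variable {y : ℕ → Ω → ℝ}

lemma st14_memL4 (hL4 : MemLp (y 0) 4) (hid : ∀ t : ℕ, IdentDistrib (y t) (y 0) ℙ ℙ) (i : ℕ) :
    MemLp (y i) 4 := (hid i).symm.memLp_snd hL4

lemma st14_pow4_int_eq (hmeas : ∀ t : ℕ, Measurable (y t))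
    (hid : ∀ t : ℕ, IdentDistrib (y t) (y 0) ℙ ℙ) (i : ℕ) :
    ∫ ω, (y i ω) ^ 4 = ∫ ω, (y 0 ω) ^ 4 :=
  ((hid i).comp (measurable_id.pow_const 4)).integral_eq

lemma st14_int4 (hmeas : ∀ t : ℕ, Measurable (y t)) (hL4 : MemLp (y 0) 4)
    (hid : ∀ t : ℕ, IdentDistrib (y t) (y 0) ℙ ℙ) (a b c d : ℕ) :
    Integrable (fun ω => y a ω * y b ω * y c ω * y d ω) := by
  have hint : Integrable (fun ω =>
      ((y a ω) ^ 4 + (y b ω) ^ 4 + (y c ω) ^ 4 + (y d ω) ^ 4) / 4) := by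
    apply Integrable.div_const
    exact (((mem4_integrable_pow4 (st14_memL4 hL4 hid a)).add
      (mem4_integrable_pow4 (st14_memL4 hL4 hid b))).add
      (mem4_integrable_pow4 (st14_memL4 hL4 hid c))).add
      (mem4_integrable_pow4 (st14_memL4 hL4 hid d))
  refine hint.mono' ?_ (Filter.Eventually.of_forall fun ω => ?_)
  · exact ((((hmeas a).mul (hmeas b)).mul (hmeas c)).mul (hmeas d)).aestronglyMeasurable
  · simpa [abs_mul] using quart_bound (y a ω) (y b ω) (y c ω) (y d ω)

lemma st14_bound4 (hmeas : ∀ t : ℕ, Measurable (y t)) (hL4 : MemLp (y 0) 4)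
    (hid : ∀ t : ℕ, IdentDistrib (y t) (y 0) ℙ ℙ) (a b c d : ℕ) :
    |∫ ω, y a ω * y b ω * y c ω * y d ω| ≤ ∫ ω, (y 0 ω) ^ 4 := by
  have hA : Integrable (fun ω => (y a ω) ^ 4) := mem4_integrable_pow4 (st14_memL4 hL4 hid a)
  have hB : Integrable (fun ω => (y b ω) ^ 4) := mem4_integrable_pow4 (st14_memL4 hL4 hid b)
  have hC : Integrable (fun ω => (y c ω) ^ 4) := mem4_integrable_pow4 (st14_memL4 hL4 hid c)
  have hD : Integrable (fun ω => (y d ω) ^ 4) := mem4_integrable_pow4 (st14_memL4 hL4 hid d)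
  have hAB : Integrable (fun ω => (y a ω) ^ 4 + (y b ω) ^ 4) := hA.add hB
  have hABC : Integrable (fun ω => (y a ω) ^ 4 + (y b ω) ^ 4 + (y c ω) ^ 4) := hAB.add hC
  have hABCD : Integrable (fun ω =>
      (y a ω) ^ 4 + (y b ω) ^ 4 + (y c ω) ^ 4 + (y d ω) ^ 4) := hABC.add hD
  have h1 : |∫ ω, y a ω * y b ω * y c ω * y d ω| ≤
      ∫ ω, |y a ω| * |y b ω| * |y c ω| * |y d ω| := by
    simpa using norm_integral_le_integral_norm (μ := (ℙ : Measure Ω))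
      (fun ω => y a ω * y b ω * y c ω * y d ω)
  have h2 : ∫ ω, |y a ω| * |y b ω| * |y c ω| * |y d ω| ≤
      ∫ ω, ((y a ω) ^ 4 + (y b ω) ^ 4 + (y c ω) ^ 4 + (y d ω) ^ 4) / 4 := by
    refine integral_mono_of_nonneg (Filter.Eventually.of_forall fun ω => by positivity)
      (hABCD.div_const 4) (Filter.Eventually.of_forall fun ω => quart_bound' _ _ _ _)
  have h3 : ∫ ω, ((y a ω) ^ 4 + (y b ω) ^ 4 + (y c ω) ^ 4 + (y d ω) ^ 4) / 4
      = ∫ ω, (y 0 ω) ^ 4 := by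
    rw [integral_div, integral_add hABC hD, integral_add hAB hC, integral_add hA hB,
      st14_pow4_int_eq hmeas hid a, st14_pow4_int_eq hmeas hid b,
      st14_pow4_int_eq hmeas hid c, st14_pow4_int_eq hmeas hid d]
    ring
  linarith

lemma st14_zero4 (hmeas : ∀ t : ℕ, Measurable (y t))
    (hind : iIndepFun y ℙ)
    (hid : ∀ t : ℕ, IdentDistrib (y t) (y 0) ℙ ℙ)
    (hmean : ∫ ω, y 0 ω = 0)
    (a b c d : ℕ) (hab : a ≠ b) (hac : a ≠ c) (had : a ≠ d)
    (hbc : b ≠ c) (hbd : b ≠ d) (hcd : c ≠ d) :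
    ∫ ω, y a ω * y b ω * y c ω * y d ω = 0 := by
  have hnotmem : a ∉ ({b, c, d} : Finset ℕ) := by simp [hab, hac, had]
  have hfi : IndepFun (∏ j ∈ ({b, c, d} : Finset ℕ), y j) (y a) ℙ :=
    hind.indepFun_finset_prod_of_notMem hmeas hnotmem
  have hprod : (∏ j ∈ ({b, c, d} : Finset ℕ), y j) = fun ω => y b ω * y c ω * y d ω := by
    funext ω
    rw [Finset.prod_insert (by simp [hbc, hbd]), Finset.prod_insert (by simp [hcd]),
      Finset.prod_singleton]
    simp [mul_assoc]
  have hya : ∫ ω, y a ω = 0 := by rw [(hid a).integral_eq]; exact hmean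
  have hmul := hfi.integral_mul_eq_mul_integral
    (by rw [hprod]; exact (((hmeas b).mul (hmeas c)).mul (hmeas d)).aestronglyMeasurable)
    (hmeas a).aestronglyMeasurable
  have heq : ∫ ω, y a ω * y b ω * y c ω * y d ω
      = ∫ ω, ((∏ j ∈ ({b, c, d} : Finset ℕ), y j) * y a) ω := by
    refine integral_congr_ae (Filter.Eventually.of_forall fun ω => ?_)
    simp only [Pi.mul_apply, hprod]
    ring
  rw [heq]
  calc ∫ ω, ((∏ j ∈ ({b, c, d} : Finset ℕ), y j) * y a) ω
      = (∫ ω, (∏ j ∈ ({b, c, d} : Finset ℕ), y j) ω) * ∫ ω, y a ω := hmul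
    _ = 0 := by rw [hya, mul_zero]


lemma st14_int4' (hmeas : ∀ t : ℕ, Measurable (y t)) (hL4 : MemLp (y 0) 4)
    (hid : ∀ t : ℕ, IdentDistrib (y t) (y 0) ℙ ℙ) (a b c d : ℕ) :
    Integrable (fun ω => (y a ω * y b ω) * (y c ω * y d ω)) :=
  (st14_int4 hmeas hL4 hid a b c d).congr (Filter.Eventually.of_forall fun ω => by ring)

lemma zval_ne {N : ℕ} {s t : ZMod (N + 1)} (h : s ≠ t) : s.val ≠ t.val :=
  fun he => h (ZMod.val_injective (N + 1) he)

lemma st14_EC2 (hmeas : ∀ t : ℕ, Measurable (y t))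
    (hind : iIndepFun y ℙ)
    (hid : ∀ t : ℕ, IdentDistrib (y t) (y 0) ℙ ℙ)
    (hmean : ∫ ω, y 0 ω = 0) (hL4 : MemLp (y 0) 4)
    (N : ℕ) (c : ZMod (N + 1)) (hc : c ≠ 0) :
    ∫ ω, (∑ s : ZMod (N + 1), y s.val ω * y ((s + c).val) ω) ^ 2
      ≤ 3 * (N + 1) * ∫ ω, (y 0 ω) ^ 4 := by
  set K := ∫ ω, (y 0 ω) ^ 4 with hK_def
  have hK : 0 ≤ K := integral_nonneg fun ω => by positivity
  set F : ZMod (N + 1) × ZMod (N + 1) → Ω → ℝ :=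
    fun q ω => (y q.1.val ω * y ((q.1 + c).val) ω) * (y q.2.val ω * y ((q.2 + c).val) ω)
    with hF_def
  have hexp : ∀ ω : Ω, (∑ s : ZMod (N + 1), y s.val ω * y ((s + c).val) ω) ^ 2
      = ∑ q : ZMod (N + 1) × ZMod (N + 1), F q ω := by
    intro ω
    rw [sq, Finset.sum_mul_sum, ← Finset.sum_product']
    rw [← Finset.univ_product_univ]
  have hIeq : ∫ ω, (∑ s : ZMod (N + 1), y s.val ω * y ((s + c).val) ω) ^ 2
      = ∑ q : ZMod (N + 1) × ZMod (N + 1), ∫ ω, F q ω := by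
    rw [integral_congr_ae (Filter.Eventually.of_forall hexp)]
    exact integral_finset_sum _ fun q _ => st14_int4' hmeas hL4 hid _ _ _ _
  set Bad : Finset (ZMod (N + 1) × ZMod (N + 1)) :=
    Finset.univ.filter (fun q => q.2 = q.1 ∨ q.2 = q.1 + c ∨ q.2 + c = q.1) with hBad_def
  have hzero : ∀ q : ZMod (N + 1) × ZMod (N + 1), q ∉ Bad → ∫ ω, F q ω = 0 := by
    intro q hq
    rw [hBad_def, Finset.mem_filter] at hq
    push_neg at hq
    obtain ⟨h1, h2, h3⟩ := hq (Finset.mem_univ q)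
    have e1 : ∫ ω, F q ω = ∫ ω, y q.1.val ω * y ((q.1 + c).val) ω * y q.2.val ω
        * y ((q.2 + c).val) ω := integral_congr_ae (Filter.Eventually.of_forall fun ω => by
      simp only [hF_def]; ring)
    rw [e1]
    refine st14_zero4 hmeas hind hid hmean _ _ _ _ ?_ ?_ ?_ ?_ ?_ ?_
    · exact zval_ne (fun h' => hc (by rwa [left_eq_add] at h'))
    · exact zval_ne (fun h' => h1 h'.symm)
    · exact zval_ne (fun h' => h3 h'.symm)
    · exact zval_ne (fun h' => h2 h'.symm)
    · exact zval_ne (fun h' => h1 (add_right_cancel h').symm)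
    · exact zval_ne (fun h' => hc (by rwa [left_eq_add] at h'))
  have hsub : ∑ q : ZMod (N + 1) × ZMod (N + 1), ∫ ω, F q ω = ∑ q ∈ Bad, ∫ ω, F q ω :=
    (Finset.sum_subset (Finset.subset_univ Bad) fun q _ hq => hzero q hq).symm
  have hcard : (Bad.card : ℝ) ≤ 3 * (N + 1) := by
    have hsub2 : Bad ⊆ (Finset.univ.image (fun s : ZMod (N + 1) => (s, s)))
        ∪ (Finset.univ.image (fun s : ZMod (N + 1) => (s, s + c)))
        ∪ (Finset.univ.image (fun s : ZMod (N + 1) => (s, s - c))) := by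
      intro q hq
      rw [hBad_def, Finset.mem_filter] at hq
      rcases hq.2 with h' | h' | h'
      · exact Finset.mem_union.2 (Or.inl (Finset.mem_union.2 (Or.inl
          (Finset.mem_image.2 ⟨q.1, Finset.mem_univ _, Prod.ext rfl h'.symm⟩))))
      · exact Finset.mem_union.2 (Or.inl (Finset.mem_union.2 (Or.inr
          (Finset.mem_image.2 ⟨q.1, Finset.mem_univ _, Prod.ext rfl h'.symm⟩))))
      · exact Finset.mem_union.2 (Or.inr (Finset.mem_image.2 ⟨q.1, Finset.mem_univ _,
          Prod.ext rfl (eq_sub_of_add_eq h').symm⟩))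
    have h1 := Finset.card_le_card hsub2
    have h2 := Finset.card_union_le ((Finset.univ.image (fun s : ZMod (N + 1) => (s, s)))
        ∪ (Finset.univ.image (fun s : ZMod (N + 1) => (s, s + c))))
        (Finset.univ.image (fun s : ZMod (N + 1) => (s, s - c)))
    have h3 := Finset.card_union_le (Finset.univ.image (fun s : ZMod (N + 1) => (s, s)))
        (Finset.univ.image (fun s : ZMod (N + 1) => (s, s + c)))
    have h4 : ∀ f : ZMod (N + 1) → ZMod (N + 1) × ZMod (N + 1),
        (Finset.univ.image f).card ≤ N + 1 := by
      intro f
      calc (Finset.univ.image f).card ≤ Finset.univ.card := Finset.card_image_le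
        _ = N + 1 := by rw [Finset.card_univ, ZMod.card]
    have := h4 (fun s => (s, s))
    have := h4 (fun s => (s, s + c))
    have := h4 (fun s => (s, s - c))
    have : Bad.card ≤ 3 * (N + 1) := by omega
    exact_mod_cast this
  calc ∫ ω, (∑ s : ZMod (N + 1), y s.val ω * y ((s + c).val) ω) ^ 2
      = ∑ q ∈ Bad, ∫ ω, F q ω := by rw [hIeq, hsub]
    _ ≤ Bad.card * K := by
        have := Finset.sum_le_card_nsmul Bad (fun q => ∫ ω, F q ω) K (fun q _ => by
          refine le_of_abs_le ?_
          show |∫ ω, F q ω| ≤ K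
          have e1 : ∫ ω, F q ω = ∫ ω, y q.1.val ω * y ((q.1 + c).val) ω * y q.2.val ω
              * y ((q.2 + c).val) ω := integral_congr_ae (Filter.Eventually.of_forall fun ω => by
            simp only [hF_def]; ring)
          rw [e1]
          exact st14_bound4 hmeas hL4 hid _ _ _ _)
        simpa [nsmul_eq_mul] using this
    _ ≤ 3 * (N + 1) * K := mul_le_mul_of_nonneg_right hcard hK



lemma st14_intCC (hmeas : ∀ t : ℕ, Measurable (y t)) (hL4 : MemLp (y 0) 4)
    (hid : ∀ t : ℕ, IdentDistrib (y t) (y 0) ℙ ℙ) (N : ℕ) (c c' : ZMod (N + 1)) :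
    Integrable (fun ω => (∑ s : ZMod (N + 1), y s.val ω * y ((s + c).val) ω)
      * (∑ s : ZMod (N + 1), y s.val ω * y ((s + c').val) ω)) := by
  have key : ∀ ω : Ω, (∑ s : ZMod (N + 1), y s.val ω * y ((s + c).val) ω)
      * (∑ s : ZMod (N + 1), y s.val ω * y ((s + c').val) ω)
      = ∑ q ∈ (Finset.univ ×ˢ Finset.univ : Finset (ZMod (N + 1) × ZMod (N + 1))),
          (y q.1.val ω * y ((q.1 + c).val) ω) * (y q.2.val ω * y ((q.2 + c').val) ω) := by
    intro ω
    rw [Finset.sum_mul_sum, ← Finset.sum_product']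
  have h := integrable_finset_sum (μ := (ℙ : Measure Ω))
    ((Finset.univ ×ˢ Finset.univ : Finset (ZMod (N + 1) × ZMod (N + 1))))
    (f := fun q ω => (y q.1.val ω * y ((q.1 + c).val) ω) * (y q.2.val ω * y ((q.2 + c').val) ω))
    (fun q _ => st14_int4' hmeas hL4 hid _ _ _ _)
  exact h.congr (Filter.Eventually.of_forall fun ω => (key ω).symm)

lemma st14_ER2 (hmeas : ∀ t : ℕ, Measurable (y t))
    (hind : iIndepFun y ℙ)
    (hid : ∀ t : ℕ, IdentDistrib (y t) (y 0) ℙ ℙ)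
    (hmean : ∫ ω, y 0 ω = 0) (hL4 : MemLp (y 0) 4)
    (N : ℕ) (P : Finset (ℤ × ℤ)) (w : ℤ × ℤ → ℝ) (cf : ℤ × ℤ → ZMod (N + 1))
    (hcne : ∀ p ∈ P, cf p ≠ 0) :
    ∫ ω, (∑ p ∈ P, w p * (∑ s : ZMod (N + 1), y s.val ω * y ((s + cf p).val) ω)) ^ 2
      ≤ (∑ p ∈ P, |w p|) ^ 2 * (3 * (N + 1) * ∫ ω, (y 0 ω) ^ 4) := by
  set K := ∫ ω, (y 0 ω) ^ 4 with hK_def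
  set B := 3 * ((N : ℝ) + 1) * K with hB_def
  set C : ZMod (N + 1) → Ω → ℝ := fun c ω => ∑ s : ZMod (N + 1), y s.val ω * y ((s + c).val) ω
    with hC_def
  have hCsq : ∀ c : ZMod (N + 1), Integrable (fun ω => (C c ω) ^ 2) := by
    intro c
    exact (st14_intCC hmeas hL4 hid N c c).congr
      (Filter.Eventually.of_forall fun ω => (sq (C c ω)).symm)
  have hCC : ∀ p ∈ P, ∀ q ∈ P, |∫ ω, C (cf p) ω * C (cf q) ω| ≤ B := by
    intro p hp q hq
    have h1 : |∫ ω, C (cf p) ω * C (cf q) ω| ≤ ∫ ω, |C (cf p) ω| * |C (cf q) ω| := by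
      simpa using norm_integral_le_integral_norm (μ := (ℙ : Measure Ω))
        (fun ω => C (cf p) ω * C (cf q) ω)
    have h2 : ∫ ω, |C (cf p) ω| * |C (cf q) ω|
        ≤ ∫ ω, ((C (cf p) ω) ^ 2 + (C (cf q) ω) ^ 2) / 2 := by
      refine integral_mono_of_nonneg (Filter.Eventually.of_forall fun ω => by positivity)
        (((hCsq (cf p)).add (hCsq (cf q))).div_const 2)
        (Filter.Eventually.of_forall fun ω => ?_)
      show |C (cf p) ω| * |C (cf q) ω| ≤ ((C (cf p) ω) ^ 2 + (C (cf q) ω) ^ 2) / 2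
      nlinarith [sq_nonneg (|C (cf p) ω| - |C (cf q) ω|), sq_abs (C (cf p) ω),
        sq_abs (C (cf q) ω), abs_nonneg (C (cf p) ω), abs_nonneg (C (cf q) ω)]
    have h3 : ∫ ω, ((C (cf p) ω) ^ 2 + (C (cf q) ω) ^ 2) / 2 ≤ B := by
      rw [integral_div, integral_add (hCsq (cf p)) (hCsq (cf q))]
      have hp2 := st14_EC2 hmeas hind hid hmean hL4 N (cf p) (hcne p hp)
      have hq2 := st14_EC2 hmeas hind hid hmean hL4 N (cf q) (hcne q hq)
      rw [hB_def]
      push_cast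
      push_cast at hp2 hq2
      linarith
    linarith
  have hexp : ∫ ω, (∑ p ∈ P, w p * C (cf p) ω) ^ 2
      = ∑ r ∈ P ×ˢ P, (w r.1 * w r.2) * ∫ ω, C (cf r.1) ω * C (cf r.2) ω := by
    have e1 : ∀ ω : Ω, (∑ p ∈ P, w p * C (cf p) ω) ^ 2
        = ∑ r ∈ P ×ˢ P, (w r.1 * w r.2) * (C (cf r.1) ω * C (cf r.2) ω) := by
      intro ω
      rw [sq, Finset.sum_mul_sum, ← Finset.sum_product']
      exact Finset.sum_congr rfl fun r _ => by ring
    rw [integral_congr_ae (Filter.Eventually.of_forall e1)]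
    rw [integral_finset_sum _ (fun r _ =>
      ((st14_intCC hmeas hL4 hid N (cf r.1) (cf r.2)).const_mul _))]
    exact Finset.sum_congr rfl fun r _ => integral_const_mul _ _
  rw [hexp]
  have hB0 : 0 ≤ B := by
    rw [hB_def]
    have : (0 : ℝ) ≤ K := integral_nonneg fun ω => by positivity
    positivity
  calc ∑ r ∈ P ×ˢ P, (w r.1 * w r.2) * ∫ ω, C (cf r.1) ω * C (cf r.2) ω
      ≤ ∑ r ∈ P ×ˢ P, |w r.1| * |w r.2| * B := by
        refine Finset.sum_le_sum fun r hr => ?_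
        rw [Finset.mem_product] at hr
        calc (w r.1 * w r.2) * ∫ ω, C (cf r.1) ω * C (cf r.2) ω
            ≤ |(w r.1 * w r.2) * ∫ ω, C (cf r.1) ω * C (cf r.2) ω| := le_abs_self _
          _ = |w r.1| * |w r.2| * |∫ ω, C (cf r.1) ω * C (cf r.2) ω| := by
              rw [abs_mul, abs_mul]
          _ ≤ |w r.1| * |w r.2| * B := by
              refine mul_le_mul_of_nonneg_left (hCC r.1 hr.1 r.2 hr.2) (by positivity)
    _ = (∑ p ∈ P, |w p|) ^ 2 * B := by
        rw [sq, Finset.sum_mul_sum, ← Finset.sum_product', Finset.sum_mul]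
  
lemma st14_cheb {R : Ω → ℝ} (hR2 : Integrable (fun ω => (R ω) ^ 2)) {a : ℝ} (ha : 0 < a) :
    (ℙ : Measure Ω) {ω | a ≤ |R ω|} ≤ ENNReal.ofReal ((∫ ω, (R ω) ^ 2) / a ^ 2) := by
  have hset : {ω | a ≤ |R ω|} = {ω | a ^ 2 ≤ (R ω) ^ 2} := by
    ext ω
    simp only [Set.mem_setOf_eq]
    constructor
    · intro h'
      calc a ^ 2 ≤ |R ω| ^ 2 := by gcongr
        _ = (R ω) ^ 2 := sq_abs _
    · intro h'
      by_contra hcon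
      push_neg at hcon
      have : (R ω) ^ 2 < a ^ 2 := by
        calc (R ω) ^ 2 = |R ω| ^ 2 := (sq_abs _).symm
          _ < a ^ 2 := by gcongr
      linarith
  rw [hset]
  have hmark := mul_meas_ge_le_integral_of_nonneg (μ := (ℙ : Measure Ω))
    (f := fun ω => (R ω) ^ 2) (Filter.Eventually.of_forall fun ω => sq_nonneg _) hR2 (a ^ 2)
  have h1 : ((ℙ : Measure Ω) {ω | a ^ 2 ≤ (R ω) ^ 2}).toReal ≤ (∫ ω, (R ω) ^ 2) / a ^ 2 := by
    rw [le_div_iff₀ (by positivity)]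
    calc ((ℙ : Measure Ω) {ω | a ^ 2 ≤ (R ω) ^ 2}).toReal * a ^ 2
        = a ^ 2 * ((ℙ : Measure Ω) {ω | a ^ 2 ≤ (R ω) ^ 2}).toReal := by ring
      _ ≤ _ := hmark
  calc (ℙ : Measure Ω) {ω | a ^ 2 ≤ (R ω) ^ 2}
      = ENNReal.ofReal (((ℙ : Measure Ω) {ω | a ^ 2 ≤ (R ω) ^ 2}).toReal) :=
        (ENNReal.ofReal_toReal (measure_ne_top _ _)).symm
    _ ≤ _ := ENNReal.ofReal_le_ofReal h1

lemma st14_lln (hmeas : ∀ t : ℕ, Measurable (y t))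
    (hind : iIndepFun y ℙ)
    (hid : ∀ t : ℕ, IdentDistrib (y t) (y 0) ℙ ℙ)
    (σ2 : ℝ) (hvar : ∫ ω, (y 0 ω) ^ 2 = σ2) (hL4 : MemLp (y 0) 4) :
    TendstoInMeasure ℙ
      (fun T : ℕ => fun ω => (((T + 1 : ℕ) : ℝ))⁻¹ * ∑ i ∈ Finset.range (T + 1), (y i ω) ^ 2)
      atTop (fun _ => σ2) := by
  have hX0int : Integrable (fun ω => (y 0 ω) ^ 2) :=
    ((st14_memL4 hL4 hid 0).mono_exponent (p := 2) (by norm_num)).integrable_sq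
  have hindep : Pairwise (Function.onFun (IndepFun · · (ℙ : Measure Ω)) (fun i ω => (y i ω) ^ 2)) := by
    intro i j hij
    exact (hind.indepFun hij).comp (measurable_id.pow_const 2) (measurable_id.pow_const 2)
  have hident : ∀ i, IdentDistrib (fun ω => (y i ω) ^ 2) (fun ω => (y 0 ω) ^ 2) ℙ ℙ :=
    fun i => (hid i).comp (measurable_id.pow_const 2)
  have hae := strong_law_ae (μ := (ℙ : Measure Ω)) _ hX0int hindep hident
  have hae' : ∀ᵐ ω ∂(ℙ : Measure Ω), Tendsto
      (fun T : ℕ => (((T + 1 : ℕ) : ℝ))⁻¹ * ∑ i ∈ Finset.range (T + 1), (y i ω) ^ 2)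
      atTop (𝓝 σ2) := by
    filter_upwards [hae] with ω hω
    have h2 := hω.comp (tendsto_add_atTop_nat 1)
    rw [hvar] at h2
    exact h2
  refine tendstoInMeasure_of_tendsto_ae (fun T => ?_) hae'
  exact (Measurable.aestronglyMeasurable (by
    exact Measurable.const_mul (Finset.measurable_sum _ fun i _ => (hmeas i).pow_const 2) _))



lemma st14_intR2 (hmeas : ∀ t : ℕ, Measurable (y t)) (hL4 : MemLp (y 0) 4)
    (hid : ∀ t : ℕ, IdentDistrib (y t) (y 0) ℙ ℙ)
    (N : ℕ) (P : Finset (ℤ × ℤ)) (w : ℤ × ℤ → ℝ) (cf : ℤ × ℤ → ZMod (N + 1)) :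
    Integrable (fun ω =>
      (∑ p ∈ P, w p * (∑ s : ZMod (N + 1), y s.val ω * y ((s + cf p).val) ω)) ^ 2) := by
  have e1 : ∀ ω : Ω,
      (∑ p ∈ P, w p * (∑ s : ZMod (N + 1), y s.val ω * y ((s + cf p).val) ω)) ^ 2
      = ∑ r ∈ P ×ˢ P, (w r.1 * w r.2) *
          ((∑ s : ZMod (N + 1), y s.val ω * y ((s + cf r.1).val) ω)
            * (∑ s : ZMod (N + 1), y s.val ω * y ((s + cf r.2).val) ω)) := by
    intro ω
    rw [sq, Finset.sum_mul_sum, ← Finset.sum_product']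
    exact Finset.sum_congr rfl fun r _ => by ring
  have hI := integrable_finset_sum (μ := (ℙ : Measure Ω)) (P ×ˢ P)
    (f := fun r ω => (w r.1 * w r.2) *
        ((∑ s : ZMod (N + 1), y s.val ω * y ((s + cf r.1).val) ω)
          * (∑ s : ZMod (N + 1), y s.val ω * y ((s + cf r.2).val) ω)))
    (fun r _ => (st14_intCC hmeas hL4 hid N (cf r.1) (cf r.2)).const_mul _)
  exact hI.congr (Filter.Eventually.of_forall fun ω => (e1 ω).symm)

end Prob
theorem stmt14 (Ω : Type) [MeasureSpace Ω] [IsProbabilityMeasure (ℙ : Measure Ω)]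
    (h g : ℤ → ℝ)
    (hhfin : (Function.support h).Finite) (hgfin : (Function.support g).Finite)
    (horth_h : ∀ k : ℤ,
      ∑ᶠ l : ℤ, h l * h (l + 2 * k) = (1 / 2) * (if k = 0 then 1 else 0))
    (horth_g : ∀ k : ℤ,
      ∑ᶠ l : ℤ, g l * g (l + 2 * k) = (1 / 2) * (if k = 0 then 1 else 0))
    (y : ℕ → Ω → ℝ) (hmeas : ∀ t : ℕ, Measurable (y t))
    (hind : iIndepFun y ℙ)
    (hid : ∀ t : ℕ, IdentDistrib (y t) (y 0) ℙ ℙ)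
    (hmean : ∫ ω, y 0 ω = 0)
    (σ2 : ℝ) (hσ : 0 < σ2) (hvar : ∫ ω, (y 0 ω) ^ 2 = σ2)
    (hL4 : MemLp (y 0) 4)
    (m : ℕ) (hm : 1 ≤ m) (n : ℕ) (hn : n ≤ 2 ^ m - 1) :
    TendstoInMeasure ℙ
      (fun T : ℕ => fun ω =>
        (∑ t : ZMod (T + 1),
            (∑ᶠ l : ℤ, wp g h m n l * y ((t - (l : ZMod (T + 1))).val) ω) ^ 2)
          / (∑ t : ZMod (T + 1), (y t.val ω) ^ 2))
      atTop (fun _ => 1 / 2 ^ m) := by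
  classical
  have hvfin := wp_fin g h hgfin hhfin m n
  set S : Finset ℤ := hvfin.toFinset with hS_def
  have hsub : Function.support (wp g h m n) ⊆ ↑S := fun l hl => hvfin.mem_toFinset.2 hl
  have horthv := wp_orth g h hgfin hhfin horth_h horth_g m hm n
  have ha0 : ∑ l ∈ S, (wp g h m n l) ^ 2 = (1 / 2 : ℝ) ^ m := by
    have h0 := horthv 0
    have e : (fun l : ℤ => wp g h m n l * wp g h m n (l + 2 ^ m * 0))
        = fun l => (wp g h m n l) ^ 2 := by
      funext l; rw [mul_zero, add_zero, sq]
    rw [e] at h0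
    norm_num at h0
    rw [← h0]
    refine (finsum_eq_sum_of_support_subset _ ?_).symm
    intro l hl
    rw [Function.mem_support] at hl
    refine hsub ?_
    rw [Function.mem_support]
    exact fun h0' => hl (by rw [h0']; ring)
  set P : Finset (ℤ × ℤ) := (S ×ˢ S).filter (fun p => p.1 ≠ p.2) with hP_def
  set A : ℝ := ∑ p ∈ P, |wp g h m n p.1 * wp g h m n p.2| with hA_def
  set K : ℝ := ∫ ω, (y 0 ω) ^ 4 with hK_def
  have hK0 : 0 ≤ K := integral_nonneg fun ω => by positivity
  have hA0 : 0 ≤ A := Finset.sum_nonneg fun p _ => abs_nonneg _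
  set N₀ : ℕ := P.sup (fun p => (p.1 - p.2).natAbs) with hN0_def
  have hPcast : ∀ T : ℕ, N₀ ≤ T → ∀ p ∈ P, ((p.1 - p.2 : ℤ) : ZMod (T + 1)) ≠ 0 := by
    intro T hT p hp hzero
    rw [ZMod.intCast_zmod_eq_zero_iff_dvd] at hzero
    have h1 : p.1 ≠ p.2 := by
      rw [hP_def, Finset.mem_filter] at hp; exact hp.2
    have h2 : (p.1 - p.2).natAbs ≠ 0 := Int.natAbs_ne_zero.mpr (sub_ne_zero.2 h1)
    have h3 : (p.1 - p.2).natAbs ≤ N₀ := Finset.le_sup (f := fun p => (p.1 - p.2).natAbs) hp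
    have h4 := Int.natAbs_dvd_natAbs.mpr hzero
    rw [Int.natAbs_natCast] at h4
    have h5 := Nat.le_of_dvd (Nat.pos_of_ne_zero h2) h4
    omega
  have hident2 : ∀ (T : ℕ) (ω : Ω),
      (∑ t : ZMod (T + 1),
          (∑ᶠ l : ℤ, wp g h m n l * y ((t - (l : ZMod (T + 1))).val) ω) ^ 2)
      = (1 / 2 : ℝ) ^ m * (∑ t : ZMod (T + 1), (y t.val ω) ^ 2)
        + ∑ p ∈ P, wp g h m n p.1 * wp g h m n p.2 *
            (∑ s : ZMod (T + 1), y s.val ω *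
              y ((s + ((p.1 - p.2 : ℤ) : ZMod (T + 1))).val) ω) := by
    intro T ω
    have hthis := st14_identity (wp g h m n) S hsub T (fun s => y s.val ω)
    rw [ha0] at hthis
    exact hthis
  rw [tendstoInMeasure_iff_dist]
  intro ε hε
  set c₀ : ℝ := 12 * A ^ 2 * K / (ε ^ 2 * σ2 ^ 2) with hc0_def
  have hlln := tendstoInMeasure_iff_dist.mp (st14_lln hmeas hind hid σ2 hvar hL4) (σ2 / 2) (by positivity)
  have htail : Tendsto (fun T : ℕ => ENNReal.ofReal (c₀ / ((T + 1 : ℕ) : ℝ))) atTop (𝓝 0) := by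
    have h1 : Tendsto (fun T : ℕ => c₀ / ((T + 1 : ℕ) : ℝ)) atTop (𝓝 0) :=
      (tendsto_const_div_atTop_nhds_zero_nat c₀).comp (tendsto_add_atTop_nat 1)
    have h2 := ENNReal.tendsto_ofReal h1
    simpa using h2
  have hupper : Tendsto (fun T : ℕ =>
      (ℙ : Measure Ω) {x | σ2 / 2 ≤ dist
          ((((T + 1 : ℕ) : ℝ))⁻¹ * ∑ i ∈ Finset.range (T + 1), (y i x) ^ 2) σ2}
        + ENNReal.ofReal (c₀ / ((T + 1 : ℕ) : ℝ))) atTop (𝓝 0) := by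
    have hadd := hlln.add htail
    rw [add_zero] at hadd
    exact hadd
  refine tendsto_of_tendsto_of_tendsto_of_le_of_le' tendsto_const_nhds
    hupper (Filter.Eventually.of_forall fun T => by positivity) ?_
  filter_upwards [Filter.eventually_ge_atTop N₀] with T hT
  have haTpos : 0 < ε * (((T : ℝ) + 1) * σ2 / 2) := by positivity
  -- Chebyshev bound for the remainder event
  have hR2int : Integrable (fun ω =>
      (∑ p ∈ P, (wp g h m n p.1 * wp g h m n p.2) *
        (∑ s : ZMod (T + 1), y s.val ω *
          y ((s + ((p.1 - p.2 : ℤ) : ZMod (T + 1))).val) ω)) ^ 2) :=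
    st14_intR2 hmeas hL4 hid T P _ _
  have hER2 := st14_ER2 hmeas hind hid hmean hL4 T P
      (fun p => wp g h m n p.1 * wp g h m n p.2)
      (fun p => ((p.1 - p.2 : ℤ) : ZMod (T + 1))) (hPcast T hT)
  have hcheb := st14_cheb (R := fun ω =>
      ∑ p ∈ P, (wp g h m n p.1 * wp g h m n p.2) *
        (∑ s : ZMod (T + 1), y s.val ω *
          y ((s + ((p.1 - p.2 : ℤ) : ZMod (T + 1))).val) ω)) hR2int haTpos
  have hchain : (ℙ : Measure Ω) {ω | ε * (((T : ℝ) + 1) * σ2 / 2) ≤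
        |∑ p ∈ P, (wp g h m n p.1 * wp g h m n p.2) *
          (∑ s : ZMod (T + 1), y s.val ω *
            y ((s + ((p.1 - p.2 : ℤ) : ZMod (T + 1))).val) ω)|}
      ≤ ENNReal.ofReal (c₀ / ((T + 1 : ℕ) : ℝ)) := by
    refine le_trans hcheb (ENNReal.ofReal_le_ofReal ?_)
    have hU : (∫ ω, (∑ p ∈ P, (wp g h m n p.1 * wp g h m n p.2) *
          (∑ s : ZMod (T + 1), y s.val ω *
            y ((s + ((p.1 - p.2 : ℤ) : ZMod (T + 1))).val) ω)) ^ 2)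
        ≤ A ^ 2 * (3 * ((T : ℝ) + 1) * K) := by
      have hh := hER2
      push_cast at hh ⊢
      try exact hh
    have heq : A ^ 2 * (3 * ((T : ℝ) + 1) * K) / (ε * (((T : ℝ) + 1) * σ2 / 2)) ^ 2
        = c₀ / ((T + 1 : ℕ) : ℝ) := by
      rw [hc0_def]
      have hT1 : ((T : ℝ) + 1) ≠ 0 := by positivity
      push_cast
      field_simp
      ring
    rw [← heq]
    gcongr
  refine le_trans (measure_mono ?_) (le_trans (measure_union_le _ _)
    (add_le_add_right hchain _))
  -- set inclusion
  intro ω hω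
  simp only [Set.mem_setOf_eq] at hω
  rw [Set.mem_union]
  by_contra hno
  push_neg at hno
  obtain ⟨h1, h2⟩ := hno
  simp only [Set.mem_setOf_eq] at h1 h2
  push_neg at h1 h2
  -- lower bound on the denominator
  have hDr : (∑ t : ZMod (T + 1), (y t.val ω) ^ 2)
      = ∑ i ∈ Finset.range (T + 1), (y i ω) ^ 2 := by
    rw [← Fin.sum_univ_eq_sum_range]; rfl
  rw [Real.dist_eq] at h1
  have habs := abs_lt.mp h1
  have hTpos : (0 : ℝ) < ((T + 1 : ℕ) : ℝ) := by positivity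
  have hfd2 : σ2 / 2 < (((T + 1 : ℕ) : ℝ))⁻¹ * ∑ i ∈ Finset.range (T + 1), (y i ω) ^ 2 := by
    linarith [habs.1]
  have hDlow : ((T : ℝ) + 1) * σ2 / 2 ≤ ∑ t : ZMod (T + 1), (y t.val ω) ^ 2 := by
    rw [hDr]
    have h' := mul_lt_mul_of_pos_left hfd2 hTpos
    rw [← mul_assoc, mul_inv_cancel₀ hTpos.ne', one_mul] at h'
    push_cast at h'
    linarith
  have hDpos : 0 < ∑ t : ZMod (T + 1), (y t.val ω) ^ 2 := by
    have : (0 : ℝ) < ((T : ℝ) + 1) * σ2 / 2 := by positivity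
    linarith
  -- the ratio deviation
  rw [Real.dist_eq] at hω
  have h2m : (1 : ℝ) / 2 ^ m = (1 / 2 : ℝ) ^ m := by rw [div_pow, one_pow]
  have hnum : (∑ t : ZMod (T + 1),
        (∑ᶠ l : ℤ, wp g h m n l * y ((t - (l : ZMod (T + 1))).val) ω) ^ 2)
        / (∑ t : ZMod (T + 1), (y t.val ω) ^ 2) - 1 / 2 ^ m
      = (∑ p ∈ P, (wp g h m n p.1 * wp g h m n p.2) *
          (∑ s : ZMod (T + 1), y s.val ω *
            y ((s + ((p.1 - p.2 : ℤ) : ZMod (T + 1))).val) ω))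
        / (∑ t : ZMod (T + 1), (y t.val ω) ^ 2) := by
    rw [hident2 T ω, h2m]
    field_simp
    ring
  rw [hnum] at hω
  rw [abs_div, abs_of_pos hDpos, le_div_iff₀ hDpos] at hω
  have hfinal : ε * (∑ t : ZMod (T + 1), (y t.val ω) ^ 2)
      < ε * (((T : ℝ) + 1) * σ2 / 2) := lt_of_le_of_lt hω h2
  have : ε * (((T : ℝ) + 1) * σ2 / 2) ≤ ε * (∑ t : ZMod (T + 1), (y t.val ω) ^ 2) :=
    mul_le_mul_of_nonneg_left hDlow hε.le
  linarith
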